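/- Let n ≥ 1, let A, B, F, G be n×n real matrices with F−G and F+G invertible, and set M₋ = (F−G)⁻¹(A−B), M₊ = (F+G)⁻¹(A+B), E = M₋M₊. Define X(t) = Σ_{k=0}^∞ E^k t^{2k}/(2k)! − M₊ · Σ_{k=0}^∞ E^k t^{2k+1}/(2k+1)!. Then X is differentiable on ℝ, X(0) = I, and for every t ∈ ℝ it satisfies the differential equation with reflection F·X′(t) + G·X′(−t) + A·X(t) + B·X(−t) = 0. -/

import Mathlib

open Matrix

attribute [local instance] Matrix.normedAddCommGroup Matrix.normedSpace

namespace ReflectionAux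

variable {n : ℕ}

/-- Left multiplication as a continuous linear map. -/
noncomputable def mulL (M : Matrix (Fin n) (Fin n) ℝ) :
    Matrix (Fin n) (Fin n) ℝ →L[ℝ] Matrix (Fin n) (Fin n) ℝ :=
  LinearMap.toContinuousLinearMap (LinearMap.mulLeft ℝ M)

@[simp] lemma mulL_apply (M P : Matrix (Fin n) (Fin n) ℝ) : mulL M P = M * P := rfl

lemma norm_mul_le' (A B : Matrix (Fin n) (Fin n) ℝ) : ‖A * B‖ ≤ n * ‖A‖ * ‖B‖ := by
  rw [Matrix.norm_le_iff (by positivity)]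
  intro i j
  calc ‖(A * B) i j‖ = ‖∑ l, A i l * B l j‖ := by rw [Matrix.mul_apply]
    _ ≤ ∑ l, ‖A i l * B l j‖ := norm_sum_le _ _
    _ ≤ ∑ _l : Fin n, ‖A‖ * ‖B‖ :=
        Finset.sum_le_sum fun l _ => by
          rw [norm_mul]
          exact mul_le_mul (norm_entry_le_entrywise_sup_norm A)
            (norm_entry_le_entrywise_sup_norm B) (norm_nonneg _) (norm_nonneg _)
    _ = n * ‖A‖ * ‖B‖ := by simp [Finset.sum_const, mul_assoc]

noncomputable def Kc (n : ℕ) : ℝ := max 1 ‖(1 : Matrix (Fin n) (Fin n) ℝ)‖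

noncomputable def cc (E : Matrix (Fin n) (Fin n) ℝ) : ℝ := max 1 ((n : ℝ) * ‖E‖)

lemma one_le_Kc : (1 : ℝ) ≤ Kc n := le_max_left _ _
lemma Kc_nonneg : (0 : ℝ) ≤ Kc n := zero_le_one.trans one_le_Kc
lemma one_le_cc (E : Matrix (Fin n) (Fin n) ℝ) : (1 : ℝ) ≤ cc E := le_max_left _ _
lemma cc_nonneg (E : Matrix (Fin n) (Fin n) ℝ) : (0 : ℝ) ≤ cc E :=
  zero_le_one.trans (one_le_cc E)

lemma norm_pow_le (E : Matrix (Fin n) (Fin n) ℝ) (k : ℕ) :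
    ‖E ^ k‖ ≤ Kc n * cc E ^ k := by
  induction k with
  | zero =>
    rw [pow_zero, pow_zero, mul_one]
    exact le_max_right 1 ‖(1 : Matrix (Fin n) (Fin n) ℝ)‖
  | succ k ih =>
    have h1 : (0 : ℝ) ≤ Kc n * cc E ^ k := mul_nonneg Kc_nonneg (pow_nonneg (cc_nonneg E) k)
    calc ‖E ^ (k + 1)‖ = ‖E ^ k * E‖ := by rw [pow_succ]
      _ ≤ n * ‖E ^ k‖ * ‖E‖ := norm_mul_le' _ _
      _ = ‖E ^ k‖ * ((n : ℝ) * ‖E‖) := by ring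
      _ ≤ (Kc n * cc E ^ k) * cc E :=
          mul_le_mul ih (le_max_right _ _) (by positivity) h1
      _ = Kc n * cc E ^ (k + 1) := by ring

/-- The master summable bound. -/
noncomputable def uB (E : Matrix (Fin n) (Fin n) ℝ) (ρ : ℝ) (k : ℕ) : ℝ :=
  (2 * (k : ℝ) + 1) * ρ * Kc n * ((ρ ^ 2 * cc E) ^ k / (Nat.factorial k))

lemma summable_k_pow_div (r : ℝ) :
    Summable (fun k : ℕ => (k : ℝ) * (r ^ k / (Nat.factorial k))) := by
  rw [← summable_nat_add_iff 1]
  refine ((Real.summable_pow_div_factorial r).mul_left r).congr fun k => ?_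
  have hk : ((Nat.factorial k : ℝ)) ≠ 0 := Nat.cast_ne_zero.mpr k.factorial_ne_zero
  have hk1 : ((k : ℝ) + 1) ≠ 0 := by positivity
  rw [Nat.factorial_succ]
  push_cast
  field_simp
  ring

lemma summable_uB (E : Matrix (Fin n) (Fin n) ℝ) (ρ : ℝ) : Summable (uB E ρ) := by
  have h1 := summable_k_pow_div (ρ ^ 2 * cc E)
  have h2 := Real.summable_pow_div_factorial (ρ ^ 2 * cc E)
  refine (((h1.mul_left 2).add h2).mul_left (ρ * Kc n)).congr fun k => ?_
  simp only [uB]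
  ring

lemma term_le (E : Matrix (Fin n) (Fin n) ℝ) {t ρ : ℝ} (hρ : 1 ≤ ρ) (ht : |t| ≤ ρ)
    (b : ℝ) (m j k : ℕ) (hb : |b| ≤ 2 * (k : ℝ) + 1) (hm : m ≤ 2 * k + 1) (hj : k ≤ j) :
    ‖(b * t ^ m / (Nat.factorial j) : ℝ) • E ^ k‖ ≤ uB E ρ k := by
  have hρ0 : (0 : ℝ) ≤ ρ := zero_le_one.trans hρ
  have hkfac : (0 : ℝ) < (Nat.factorial k : ℝ) := by
    exact_mod_cast Nat.factorial_pos k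
  rw [norm_smul]
  have htm : |t| ^ m ≤ ρ ^ (2 * k + 1) :=
    (pow_le_pow_left₀ (abs_nonneg t) ht m).trans (pow_le_pow_right₀ hρ hm)
  have hnum : |b| * |t| ^ m ≤ (2 * (k : ℝ) + 1) * ρ ^ (2 * k + 1) :=
    mul_le_mul hb htm (by positivity) (by positivity)
  have hden : (Nat.factorial k : ℝ) ≤ (Nat.factorial j : ℝ) := by
    exact_mod_cast Nat.factorial_le hj
  calc ‖(b * t ^ m / (Nat.factorial j) : ℝ)‖ * ‖E ^ k‖
      = |b| * |t| ^ m / (Nat.factorial j) * ‖E ^ k‖ := by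
        rw [Real.norm_eq_abs, abs_div, abs_mul, abs_pow,
          Nat.abs_cast]
    _ ≤ ((2 * (k : ℝ) + 1) * ρ ^ (2 * k + 1) / (Nat.factorial k)) * (Kc n * cc E ^ k) := by
        refine mul_le_mul ?_ (norm_pow_le E k) (norm_nonneg _) (by positivity)
        exact div_le_div₀ (by positivity) hnum hkfac hden
    _ = uB E ρ k := by
        simp only [uB]
        rw [pow_succ, pow_mul, mul_pow]
        ring

noncomputable def Cf (E : Matrix (Fin n) (Fin n) ℝ) (t : ℝ) : Matrix (Fin n) (Fin n) ℝ :=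
  ∑' k : ℕ, (t ^ (2 * k) / (Nat.factorial (2 * k)) : ℝ) • E ^ k

noncomputable def Sf (E : Matrix (Fin n) (Fin n) ℝ) (t : ℝ) : Matrix (Fin n) (Fin n) ℝ :=
  ∑' k : ℕ, (t ^ (2 * k + 1) / (Nat.factorial (2 * k + 1)) : ℝ) • E ^ k

lemma one_le_rho (t : ℝ) : (1 : ℝ) ≤ |t| + 1 := by linarith [abs_nonneg t]

lemma summable_C (E : Matrix (Fin n) (Fin n) ℝ) (t : ℝ) :
    Summable (fun k : ℕ => (t ^ (2 * k) / (Nat.factorial (2 * k)) : ℝ) • E ^ k) := by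
  refine Summable.of_norm_bounded (summable_uB E (|t| + 1)) fun k => ?_
  have h := term_le E (one_le_rho t) (le_of_lt (by linarith [abs_nonneg t] : |t| < |t| + 1))
    1 (2 * k) (2 * k) k (by rw [abs_one]; have h0 : (0:ℝ) ≤ (k:ℝ) := Nat.cast_nonneg k; linarith) (by omega) (by omega)
  simpa using h

lemma summable_S (E : Matrix (Fin n) (Fin n) ℝ) (t : ℝ) :
    Summable (fun k : ℕ => (t ^ (2 * k + 1) / (Nat.factorial (2 * k + 1)) : ℝ) • E ^ k) := by
  refine Summable.of_norm_bounded (summable_uB E (|t| + 1)) fun k => ?_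
  have h := term_le E (one_le_rho t) (le_of_lt (by linarith [abs_nonneg t] : |t| < |t| + 1))
    1 (2 * k + 1) (2 * k + 1) k (by rw [abs_one]; have h0 : (0:ℝ) ≤ (k:ℝ) := Nat.cast_nonneg k; linarith) (by omega) (by omega)
  simpa using h

lemma Cf_neg (E : Matrix (Fin n) (Fin n) ℝ) (t : ℝ) : Cf E (-t) = Cf E t := by
  unfold Cf
  refine tsum_congr fun k => ?_
  rw [Even.neg_pow (even_two_mul k)]

lemma Sf_neg (E : Matrix (Fin n) (Fin n) ℝ) (t : ℝ) : Sf E (-t) = -Sf E t := by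
  unfold Sf
  rw [← tsum_neg]
  refine tsum_congr fun k => ?_
  rw [Odd.neg_pow ⟨k, by ring⟩, neg_div, neg_smul]

lemma Cf_zero (E : Matrix (Fin n) (Fin n) ℝ) : Cf E 0 = 1 := by
  unfold Cf
  have h : ∀ k : ℕ, k ≠ 0 →
      ((0:ℝ) ^ (2 * k) / (Nat.factorial (2 * k)) : ℝ) • E ^ k = 0 := fun k hk => by
    rw [zero_pow (by omega : 2 * k ≠ 0), zero_div, zero_smul]
  have h2 := tsum_eq_single (L := SummationFilter.unconditional ℕ) (f := fun k : ℕ =>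
    ((0:ℝ) ^ (2 * k) / (Nat.factorial (2 * k)) : ℝ) • E ^ k) 0 h
  rw [h2]
  simp

lemma Sf_zero (E : Matrix (Fin n) (Fin n) ℝ) : Sf E 0 = 0 := by
  unfold Sf
  have h : ∀ k : ℕ, ((0:ℝ) ^ (2 * k + 1) / (Nat.factorial (2 * k + 1)) : ℝ) • E ^ k
      = (0 : Matrix (Fin n) (Fin n) ℝ) := fun k => by
    rw [zero_pow (by omega : 2 * k + 1 ≠ 0), zero_div, zero_smul]
  rw [tsum_congr h, tsum_zero]

lemma mem_ball_iff {x y : ℝ} : y ∈ Metric.ball (0 : ℝ) (|x| + 1) ↔ |y| < |x| + 1 := by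
  rw [Metric.mem_ball, Real.dist_eq, sub_zero]

lemma hasDerivAt_Sf (E : Matrix (Fin n) (Fin n) ℝ) (x : ℝ) :
    HasDerivAt (Sf E) (Cf E x) x := by
  have hx : x ∈ Metric.ball (0 : ℝ) (|x| + 1) := mem_ball_iff.mpr (by linarith [abs_nonneg x])
  have h := hasDerivAt_tsum_of_isPreconnected (summable_uB E (|x| + 1))
    (Metric.isOpen_ball) (convex_ball (0:ℝ) (|x|+1)).isPreconnected
    (g := fun k y => (y ^ (2 * k + 1) / (Nat.factorial (2 * k + 1)) : ℝ) • E ^ k)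
    (g' := fun k y => (y ^ (2 * k) / (Nat.factorial (2 * k)) : ℝ) • E ^ k)
    (fun k y _ => ?_) (fun k y hy => ?_) hx (summable_S E x) hx
  · exact h
  · have hd := ((hasDerivAt_pow (2 * k + 1) y).div_const
      ((Nat.factorial (2 * k + 1) : ℝ))).smul_const (E ^ k)
    convert hd using 2
    have hfac : ((Nat.factorial (2 * k + 1) : ℝ)) = (2 * (k : ℝ) + 1) * (Nat.factorial (2 * k)) := by
      rw [Nat.factorial_succ]; push_cast; ring
    have h2 : (0:ℝ) < (Nat.factorial (2 * k) : ℝ) := by exact_mod_cast Nat.factorial_pos _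
    rw [hfac]
    have : 2 * k + 1 - 1 = 2 * k := by omega
    rw [this]
    push_cast
    field_simp
  · have hyρ : |y| ≤ |x| + 1 := le_of_lt (mem_ball_iff.mp hy)
    have h := term_le E (one_le_rho x) hyρ 1 (2 * k) (2 * k) k
      (by rw [abs_one]; have h0 : (0:ℝ) ≤ (k:ℝ) := Nat.cast_nonneg k; linarith) (by omega) (by omega)
    simpa using h

lemma hasDerivAt_Cf (E : Matrix (Fin n) (Fin n) ℝ) (x : ℝ) :
    HasDerivAt (Cf E) (E * Sf E x) x := by
  have hx : x ∈ Metric.ball (0 : ℝ) (|x| + 1) := mem_ball_iff.mpr (by linarith [abs_nonneg x])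
  have hbound : ∀ (k : ℕ) (y : ℝ), y ∈ Metric.ball (0 : ℝ) (|x| + 1) →
      ‖(((2 * k : ℕ) : ℝ) * y ^ (2 * k - 1) / (Nat.factorial (2 * k)) : ℝ) • E ^ k‖
        ≤ uB E (|x| + 1) k := by
    intro k y hy
    have hyρ : |y| ≤ |x| + 1 := le_of_lt (mem_ball_iff.mp hy)
    refine term_le E (one_le_rho x) hyρ ((2 * k : ℕ) : ℝ) (2 * k - 1) (2 * k) k ?_
      (by omega) (by omega)
    rw [Nat.abs_cast]
    push_cast
    linarith
  have h := hasDerivAt_tsum_of_isPreconnected (summable_uB E (|x| + 1))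
    (Metric.isOpen_ball) (convex_ball (0:ℝ) (|x|+1)).isPreconnected
    (g := fun k y => (y ^ (2 * k) / (Nat.factorial (2 * k)) : ℝ) • E ^ k)
    (g' := fun k y => (((2 * k : ℕ) : ℝ) * y ^ (2 * k - 1) / (Nat.factorial (2 * k)) : ℝ) • E ^ k)
    (fun k y _ => ((hasDerivAt_pow (2 * k) y).div_const
      ((Nat.factorial (2 * k) : ℝ))).smul_const (E ^ k))
    hbound hx (summable_C E x) hx
  have hsum : Summable (fun k : ℕ =>
      (((2 * k : ℕ) : ℝ) * x ^ (2 * k - 1) / (Nat.factorial (2 * k)) : ℝ) • E ^ k) :=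
    Summable.of_norm_bounded (summable_uB E (|x| + 1)) fun k => hbound k x hx
  have key : (∑' k : ℕ,
      (((2 * k : ℕ) : ℝ) * x ^ (2 * k - 1) / (Nat.factorial (2 * k)) : ℝ) • E ^ k)
      = E * Sf E x := by
    rw [hsum.tsum_eq_zero_add]
    have h0 : (((2 * 0 : ℕ) : ℝ) * x ^ (2 * 0 - 1) / (Nat.factorial (2 * 0)) : ℝ) • E ^ 0
        = 0 := by norm_num
    rw [h0, zero_add]
    have hterm : ∀ k : ℕ,
        (((2 * (k + 1) : ℕ) : ℝ) * x ^ (2 * (k + 1) - 1) / (Nat.factorial (2 * (k + 1))) : ℝ)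
            • E ^ (k + 1)
          = mulL E ((x ^ (2 * k + 1) / (Nat.factorial (2 * k + 1)) : ℝ) • E ^ k) := by
      intro k
      rw [mulL_apply, Matrix.mul_smul, ← pow_succ']
      congr 1
      have h1 : 2 * (k + 1) - 1 = 2 * k + 1 := by omega
      have h2 : 2 * (k + 1) = (2 * k + 1) + 1 := by omega
      rw [h1, h2, Nat.factorial_succ]
      have h3 : (0:ℝ) < (Nat.factorial (2 * k + 1) : ℝ) := by exact_mod_cast Nat.factorial_pos _
      push_cast
      field_simp
    rw [tsum_congr hterm, ← ContinuousLinearMap.map_tsum (mulL E) (summable_S E x)]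
    rfl
  rw [← key]
  exact h

end ReflectionAux

open ReflectionAux

/-- For `n ≥ 1` and real `n×n` matrices `A, B, F, G` with `F - G` and
`F + G` invertible, setting `M₊ = (F+G)⁻¹(A+B)`, `M₋ = (F-G)⁻¹(A-B)`, `E = M₋M₊`, the
matrix function `X(t) = Σ E^k t^(2k)/(2k)! - M₊ Σ E^k t^(2k+1)/(2k+1)!` is differentiable,
satisfies `X(0) = I` and the differential equation with reflection
`F X'(t) + G X'(-t) + A X(t) + B X(-t) = 0`. -/
theorem fundamental_matrix_of_reflection_system
    (n : ℕ) (hn : 1 ≤ n) (A B F G : Matrix (Fin n) (Fin n) ℝ)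
    (hFGm : IsUnit (F - G)) (hFGp : IsUnit (F + G)) :
    let Mp := (F + G)⁻¹ * (A + B)
    let E := ((F - G)⁻¹ * (A - B)) * Mp
    let X : ℝ → Matrix (Fin n) (Fin n) ℝ := fun t =>
      (∑' k : ℕ, (t ^ (2 * k) / (Nat.factorial (2 * k)) : ℝ) • E ^ k)
        - Mp * ∑' k : ℕ, (t ^ (2 * k + 1) / (Nat.factorial (2 * k + 1)) : ℝ) • E ^ k
    Differentiable ℝ X ∧ X 0 = 1 ∧
      ∀ t : ℝ, F * deriv X t + G * deriv X (-t) + A * X t + B * X (-t) = 0 := by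
  intro Mp E X
  have hXdef : X = fun t => Cf E t - Mp * Sf E t := rfl
  have hD : ∀ t : ℝ, HasDerivAt X (E * Sf E t - Mp * Cf E t) t := by
    intro t
    rw [hXdef]
    exact (hasDerivAt_Cf E t).sub
      ((mulL Mp).hasFDerivAt.comp_hasDerivAt t (hasDerivAt_Sf E t))
  have hderiv : ∀ t : ℝ, deriv X t = E * Sf E t - Mp * Cf E t := fun t => (hD t).deriv
  refine ⟨fun t => (hD t).differentiableAt, ?_, ?_⟩
  · rw [hXdef]
    simp only []
    rw [Cf_zero, Sf_zero, mul_zero, sub_zero]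
  · intro t
    have hdm : IsUnit (F - G).det := (Matrix.isUnit_iff_isUnit_det _).mp hFGm
    have hdp : IsUnit (F + G).det := (Matrix.isUnit_iff_isUnit_det _).mp hFGp
    have h2 : (F + G) * Mp = A + B := Matrix.mul_nonsing_inv_cancel_left _ _ hdp
    have h1 : (F - G) * E = (A - B) * Mp := by
      show (F - G) * (((F - G)⁻¹ * (A - B)) * Mp) = (A - B) * Mp
      rw [mul_assoc ((F - G)⁻¹) (A - B) Mp, Matrix.mul_nonsing_inv_cancel_left _ _ hdm]
    rw [hderiv t, hderiv (-t), hXdef]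
    simp only [Cf_neg, Sf_neg]
    have key : F * (E * Sf E t - Mp * Cf E t) + G * (E * -Sf E t - Mp * Cf E t)
        + A * (Cf E t - Mp * Sf E t) + B * (Cf E t - Mp * -Sf E t)
        = ((F - G) * E - (A - B) * Mp) * Sf E t + ((A + B) - (F + G) * Mp) * Cf E t := by
      noncomm_ring
    rw [key, h1, h2, sub_self, sub_self, Matrix.zero_mul, Matrix.zero_mul, add_zero]
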